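/- Suppose the norm ν on E is order continuous. Let S : E^t → F be a positive linear operator that is ρ-norm continuous (there exists C ≥ 0 with μ(S(x)) ≤ C·ρ(x) for all x ∈ E^t), and let T : E → F be its restriction to E. Then the following are equivalent: (i) for every increasing sequence (x_n) in E with 0 ≤ x_n and sup_n ν(x_n) < ∞, the sequence (T(x_n)) converges in μ-norm in F; (ii) for every increasing sequence (x_n) in E^t with 0 ≤ x_n and sup_n ρ(x_n) < ∞, the sequence (S(x_n)) converges in μ-norm in F. -/

import Mathlib

theorem stmt19
    {G : Type*} [Lattice G] [AddCommGroup G] [Module ℝ G]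
    [CovariantClass G G (· + ·) (· ≤ ·)] [PosSMulMono ℝ G]
    (arch : ∀ x y : G, (∀ n : ℕ, n • x ≤ y) → x ≤ 0)
    (E : Set G)
    (hE0 : (0 : G) ∈ E)
    (hEadd : ∀ x ∈ E, ∀ y ∈ E, x + y ∈ E)
    (hEsmul : ∀ (c : ℝ), ∀ x ∈ E, c • x ∈ E)
    (hEsup : ∀ x ∈ E, ∀ y ∈ E, x ⊔ y ∈ E)
    (hEinf : ∀ x ∈ E, ∀ y ∈ E, x ⊓ y ∈ E)
    (hdense : ∀ x : G, 0 < x → ∃ y ∈ E, 0 < y ∧ y ≤ x)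
    (hmaj : ∀ x : G, ∃ y ∈ E, x ≤ y)
    (ν : G → ℝ)
    (hν_zero : ∀ x ∈ E, (ν x = 0 ↔ x = 0))
    (hν_smul : ∀ (c : ℝ), ∀ x ∈ E, ν (c • x) = |c| * ν x)
    (hν_add : ∀ x ∈ E, ∀ y ∈ E, ν (x + y) ≤ ν x + ν y)
    (hν_mono : ∀ x ∈ E, ∀ y ∈ E, |x| ≤ |y| → ν x ≤ ν y)
    (ρ : G → ℝ)
    (hρ : ∀ x : G, ρ x = sSup (ν '' {z | z ∈ E ∧ 0 ≤ z ∧ z ≤ |x|}))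
    (ι : G → ℝ)
    (hι : ∀ x : G, ι x = sInf (ν '' {y | y ∈ E ∧ |x| ≤ y}))
    (Et : Set G)
    (hEEt : E ⊆ Et)
    (hEtadd : ∀ x ∈ Et, ∀ y ∈ Et, x + y ∈ Et)
    (hEtsmul : ∀ (c : ℝ), ∀ x ∈ Et, c • x ∈ Et)
    (hEtsup : ∀ x ∈ Et, ∀ y ∈ Et, x ⊔ y ∈ Et)
    (hEtinf : ∀ x ∈ Et, ∀ y ∈ Et, x ⊓ y ∈ Et)
    (hEt : ∀ x ∈ Et, ι x = ρ x)
    (hoc : ∀ D : Set G, D.Nonempty → D ⊆ E → (∀ d ∈ D, 0 ≤ d) →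
      DirectedOn (· ≥ ·) D → IsGLB D 0 → sInf (ν '' D) = 0)
    {F : Type*} [ConditionallyCompleteLattice F] [AddCommGroup F] [Module ℝ F]
    [CovariantClass F F (· + ·) (· ≤ ·)] [PosSMulMono ℝ F]
    (μ : F → ℝ)
    (hμ_zero : ∀ x : F, (μ x = 0 ↔ x = 0))
    (hμ_smul : ∀ (c : ℝ) (x : F), μ (c • x) = |c| * μ x)
    (hμ_add : ∀ x y : F, μ (x + y) ≤ μ x + μ y)
    (hμ_mono : ∀ x y : F, |x| ≤ |y| → μ x ≤ μ y)
    (S : G → F)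
    (hS_add : ∀ x ∈ Et, ∀ y ∈ Et, S (x + y) = S x + S y)
    (hS_smul : ∀ (c : ℝ), ∀ x ∈ Et, S (c • x) = c • S x)
    (hS_pos : ∀ x ∈ Et, 0 ≤ x → 0 ≤ S x)
    (hS_cont : ∃ C : ℝ, 0 ≤ C ∧ ∀ x ∈ Et, μ (S x) ≤ C * ρ x) :
    (∀ x : ℕ → G, (∀ n, x n ∈ E) → (∀ n, 0 ≤ x n) → Monotone x →
        BddAbove (Set.range fun n => ν (x n)) →
        ∃ l : F, Filter.Tendsto (fun n => μ (S (x n) - l)) Filter.atTop (nhds 0)) ↔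
    (∀ x : ℕ → G, (∀ n, x n ∈ Et) → (∀ n, 0 ≤ x n) → Monotone x →
        BddAbove (Set.range fun n => ρ (x n)) →
        ∃ l : F, Filter.Tendsto (fun n => μ (S (x n) - l)) Filter.atTop (nhds 0)) := by

  classical
  obtain ⟨C, hC0, hC⟩ := hS_cont
  -- basic facts about ν
  have hν0 : ν (0 : G) = 0 := (hν_zero 0 hE0).2 rfl
  have hEneg : ∀ x ∈ E, -x ∈ E := by
    intro x hx
    have : (-1 : ℝ) • x = -x := by simp
    rw [← this]; exact hEsmul _ x hx
  have hEsub : ∀ x ∈ E, ∀ y ∈ E, x - y ∈ E := by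
    intro x hx y hy
    rw [sub_eq_add_neg]; exact hEadd x hx _ (hEneg y hy)
  have hEtneg : ∀ x ∈ Et, -x ∈ Et := by
    intro x hx
    have : (-1 : ℝ) • x = -x := by simp
    rw [← this]; exact hEtsmul _ x hx
  have hEtsub : ∀ x ∈ Et, ∀ y ∈ Et, x - y ∈ Et := by
    intro x hx y hy
    rw [sub_eq_add_neg]; exact hEtadd x hx _ (hEtneg y hy)
  have hνneg : ∀ x ∈ E, ν (-x) = ν x := by
    intro x hx
    have h1 : (-1 : ℝ) • x = -x := by simp
    rw [← h1, hν_smul (-1) x hx]; simp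
  have hνnn : ∀ x ∈ E, 0 ≤ ν x := by
    intro x hx
    have h := hν_add x hx (-x) (hEneg x hx)
    rw [add_neg_cancel, hν0, hνneg x hx] at h
    linarith
  have hμnn : ∀ x : F, 0 ≤ μ x := by
    intro x
    have hneg : μ (-x) = μ x := by
      have h1 : (-1 : ℝ) • x = -x := by simp
      rw [← h1, hμ_smul (-1) x]; simp
    have h0 : μ (0 : F) = 0 := (hμ_zero 0).2 rfl
    have h := hμ_add x (-x)
    rw [add_neg_cancel, h0, hneg] at h
    linarith
  -- boundedness of defining sets for ρ
  have hbdd : ∀ b : G, BddAbove (ν '' {z | z ∈ E ∧ 0 ≤ z ∧ z ≤ |b|}) := by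
    intro b
    obtain ⟨y, hyE, hy⟩ := hmaj |b|
    refine ⟨ν y, ?_⟩
    rintro _ ⟨z, ⟨hzE, hz0, hzb⟩, rfl⟩
    exact hν_mono z hzE y hyE (by rw [abs_of_nonneg hz0]; exact (hzb.trans hy).trans (le_abs_self y))
  have hmem0 : ∀ b : G, (0 : ℝ) ∈ ν '' {z | z ∈ E ∧ 0 ≤ z ∧ z ≤ |b|} :=
    fun b => ⟨0, ⟨hE0, le_rfl, abs_nonneg b⟩, hν0⟩
  have hρnn : ∀ b : G, 0 ≤ ρ b := by
    intro b
    rw [hρ]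
    exact le_csSup (hbdd b) (hmem0 b)
  -- element of the defining set is ≤ ρ
  have hle_ρ : ∀ b : G, ∀ z ∈ E, 0 ≤ z → z ≤ |b| → ν z ≤ ρ b := by
    intro b z hzE hz0 hzb
    rw [hρ]
    exact le_csSup (hbdd b) ⟨z, ⟨hzE, hz0, hzb⟩, rfl⟩
  -- ρ is monotone w.r.t. |·|
  have hρmono : ∀ a b : G, |a| ≤ |b| → ρ a ≤ ρ b := by
    intro a b hab
    rw [hρ a]
    apply Real.sSup_le
    · rintro _ ⟨z, ⟨hzE, hz0, hza⟩, rfl⟩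
      exact hle_ρ b z hzE hz0 (hza.trans hab)
    · exact hρnn b
  -- ρ u ≤ ν y for majorants y ∈ E
  have hρ_le_ν : ∀ u : G, ∀ y ∈ E, |u| ≤ y → ρ u ≤ ν y := by
    intro u y hyE hy
    rw [hρ]
    apply Real.sSup_le
    · rintro _ ⟨z, ⟨hzE, hz0, hzu⟩, rfl⟩
      exact hν_mono z hzE y hyE (by rw [abs_of_nonneg hz0]; exact (hzu.trans hy).trans (le_abs_self y))
    · exact hνnn y hyE
  -- key approximation lemma
  have key : ∀ u ∈ Et, 0 ≤ u → ∀ ε : ℝ, 0 < ε → ∃ z ∈ E, 0 ≤ z ∧ z ≤ u ∧ ρ (u - z) < ε := by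
    intro u _ hu0 ε hε
    set A : Set G := {z | z ∈ E ∧ 0 ≤ z ∧ z ≤ u} with hA
    have hAlub : IsLUB A u := by
      constructor
      · rintro z ⟨_, _, hzu⟩; exact hzu
      · intro v hv
        by_contra hvu
        have hd0 : 0 ≤ u - u ⊓ v := sub_nonneg.2 inf_le_left
        have hdne : u - u ⊓ v ≠ 0 := by
          intro h
          have h2 : u = u ⊓ v := sub_eq_zero.1 h
          exact hvu (h2 ▸ inf_le_right)
        have hdpos : 0 < u - u ⊓ v := lt_of_le_of_ne hd0 (Ne.symm hdne)
        obtain ⟨e, heE, he0, hed⟩ := hdense _ hdpos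
        have hstep : ∀ n : ℕ, (n • e) ∈ A := by
          intro n
          induction n with
          | zero => exact ⟨by simpa using hE0, by simp, by simpa using hu0⟩
          | succ n ih =>
            have ihv : n • e ≤ v := hv ih
            obtain ⟨ihE, ih0, ihu⟩ := ih
            have hinf : n • e ≤ u ⊓ v := le_inf ihu ihv
            refine ⟨?_, ?_, ?_⟩
            · rw [succ_nsmul]; exact hEadd _ ihE e heE
            · rw [succ_nsmul]; exact add_nonneg ih0 he0.le
            · rw [succ_nsmul]
              calc n • e + e ≤ u ⊓ v + (u - u ⊓ v) := add_le_add hinf hed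
                _ = u := by abel
        have : e ≤ 0 := arch e u (fun n => (hstep n).2.2)
        exact absurd this he0.not_ge
    set B : Set G := {w | ∃ z, (z ∈ E ∧ 0 ≤ z ∧ z ≤ u) ∧ ∃ y, (y ∈ E ∧ u ≤ y) ∧ w = y - z} with hB
    obtain ⟨y0, hy0E, hy0⟩ := hmaj u
    have hBne : B.Nonempty := ⟨y0 - 0, 0, ⟨hE0, le_rfl, hu0⟩, y0, ⟨hy0E, hy0⟩, rfl⟩
    have hBE : B ⊆ E := by
      rintro _ ⟨z, ⟨hzE, _, _⟩, y, ⟨hyE, _⟩, rfl⟩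
      exact hEsub y hyE z hzE
    have hBpos : ∀ w ∈ B, 0 ≤ w := by
      rintro _ ⟨z, ⟨_, _, hzu⟩, y, ⟨_, huy⟩, rfl⟩
      exact sub_nonneg.2 (hzu.trans huy)
    have hBdir : DirectedOn (· ≥ ·) B := by
      rintro _ ⟨z1, ⟨hz1E, hz10, hz1u⟩, y1, ⟨hy1E, huy1⟩, rfl⟩ _ ⟨z2, ⟨hz2E, hz20, hz2u⟩, y2, ⟨hy2E, huy2⟩, rfl⟩
      refine ⟨(y1 ⊓ y2) - (z1 ⊔ z2), ⟨z1 ⊔ z2, ⟨hEsup z1 hz1E z2 hz2E, le_trans hz10 le_sup_left, sup_le hz1u hz2u⟩,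
        y1 ⊓ y2, ⟨hEinf y1 hy1E y2 hy2E, le_inf huy1 huy2⟩, rfl⟩, ?_, ?_⟩
      · exact sub_le_sub inf_le_left le_sup_left
      · exact sub_le_sub inf_le_right le_sup_right
    have hBglb : IsGLB B 0 := by
      constructor
      · exact hBpos
      · intro b hb
        have hmajb : ∀ y, y ∈ E → u ≤ y → b + u ≤ y := by
          intro y hyE huy
          have : u ≤ y - b := by
            apply hAlub.2
            rintro z ⟨hzE, hz0, hzu⟩
            have hbz : b ≤ y - z := hb ⟨z, ⟨hzE, hz0, hzu⟩, y, ⟨hyE, huy⟩, rfl⟩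
            exact le_sub_comm.1 hbz
          rw [add_comm]
          exact le_sub_iff_add_le.1 this
        by_contra hb0
        have hd0 : (0 : G) ≤ b ⊔ 0 := le_sup_right
        have hdne : b ⊔ 0 ≠ 0 := fun h => hb0 (sup_eq_right.1 h)
        have hdpos : (0 : G) < b ⊔ 0 := lt_of_le_of_ne hd0 (Ne.symm hdne)
        obtain ⟨e, heE, he0, hed⟩ := hdense _ hdpos
        have hstep : ∀ y, y ∈ E → u ≤ y → u + e ≤ y := by
          intro y hyE huy
          calc u + e ≤ u + (b ⊔ 0) := add_le_add_right hed u
            _ = (u + b) ⊔ (u + 0) := add_sup b 0 u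
            _ ≤ y ⊔ y := sup_le_sup (by rw [add_comm]; exact hmajb y hyE huy) (by simpa using huy)
            _ = y := sup_idem y
        have hiter : ∀ n : ℕ, ∀ y, y ∈ E → u ≤ y → u + n • e ≤ y := by
          intro n
          induction n with
          | zero => intro y _ huy; simpa using huy
          | succ n ih =>
            intro y hyE huy
            have h1 : u + e ≤ y := hstep y hyE huy
            have h2 : u ≤ y - e := le_sub_iff_add_le.2 h1
            have h3 : u + n • e ≤ y - e := ih (y - e) (hEsub y hyE e heE) h2
            rw [succ_nsmul]
            have heq : u + (n • e + e) = (u + n • e) + e := by abel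
            rw [heq]
            exact le_sub_iff_add_le.1 h3
        have : e ≤ 0 := by
          apply arch e (y0 - u)
          intro n
          have h5 := hiter n y0 hy0E hy0
          rw [add_comm] at h5
          exact le_sub_iff_add_le.2 h5
        exact absurd this he0.not_ge
    have hinf0 : sInf (ν '' B) = 0 := hoc B hBne hBE hBpos hBdir hBglb
    have hlt : sInf (ν '' B) < ε := by rw [hinf0]; exact hε
    obtain ⟨_, ⟨w, hwB, rfl⟩, hwε⟩ := exists_lt_of_csInf_lt (hBne.image ν) hlt
    obtain ⟨z, ⟨hzE, hz0, hzu⟩, y, ⟨hyE, huy⟩, rfl⟩ := hwB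
    refine ⟨z, hzE, hz0, hzu, ?_⟩
    have h1 : ρ (u - z) ≤ ν (y - z) := by
      apply hρ_le_ν
      · exact hEsub y hyE z hzE
      · rw [abs_of_nonneg (sub_nonneg.2 hzu)]
        exact sub_le_sub_right huy z
    exact lt_of_le_of_lt h1 hwε
  constructor
  · -- (i) → (ii)
    intro hi x hxEt hx0 hxmono hxbdd
    obtain ⟨M, hM⟩ := hxbdd
    have hMρ : ∀ n, ρ (x n) ≤ M := fun n => hM ⟨n, rfl⟩
    -- choose approximants
    have hz' : ∀ n : ℕ, ∃ z ∈ E, 0 ≤ z ∧ z ≤ x n ∧ ρ (x n - z) < 1 / (n + 1) := by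
      intro n
      exact key (x n) (hxEt n) (hx0 n) (1 / (n + 1)) (by positivity)
    choose z' hz'E hz'0 hz'le hz'ρ using hz'
    set z : ℕ → G := fun n => partialSups z' n with hzdef
    have hzE : ∀ n, z n ∈ E := by
      intro n
      induction n with
      | zero => simpa [hzdef] using hz'E 0
      | succ n ih =>
        have : z (n + 1) = z n ⊔ z' (n + 1) := partialSups_succ z' n
        rw [this]; exact hEsup _ ih _ (hz'E (n + 1))
    have hz0 : ∀ n, 0 ≤ z n := fun n => le_trans (hz'0 0) (le_trans (le_partialSups_of_le z' (Nat.zero_le n)) le_rfl)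
    have hzmono : Monotone z := (partialSups z').monotone
    have hzle : ∀ n, z n ≤ x n := by
      intro n
      apply partialSups_le
      intro k hk
      exact (hz'le k).trans (hxmono hk)
    have hz'lez : ∀ n, z' n ≤ z n := fun n => le_partialSups z' n
    have hνz : ∀ n, ν (z n) ≤ M := by
      intro n
      have h1 : ν (z n) ≤ ρ (x n) := by
        apply hle_ρ (x n) (z n) (hzE n) (hz0 n)
        rw [abs_of_nonneg (hx0 n)]
        exact hzle n
      exact h1.trans (hMρ n)
    obtain ⟨l, hl⟩ := hi z hzE hz0 hzmono ⟨M, by rintro _ ⟨n, rfl⟩; exact hνz n⟩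
    refine ⟨l, ?_⟩
    have hbound : ∀ n, μ (S (x n) - l) ≤ C * (1 / (n + 1)) + μ (S (z n) - l) := by
      intro n
      have hsplit : S (x n) - l = (S (x n) - S (z n)) + (S (z n) - l) := by abel
      have h1 : μ (S (x n) - l) ≤ μ (S (x n) - S (z n)) + μ (S (z n) - l) := by
        rw [hsplit]; exact hμ_add _ _
      have hzEt : z n ∈ Et := hEEt (hzE n)
      have hdiff : S (x n - z n) = S (x n) - S (z n) := by
        have hneg : S (-(z n)) = -(S (z n)) := by
          have h2 : (-1 : ℝ) • z n = -(z n) := by simp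
          have h3 : (-1 : ℝ) • S (z n) = -(S (z n)) := by simp
          rw [← h2, hS_smul (-1) _ hzEt, h3]
        rw [sub_eq_add_neg, hS_add _ (hxEt n) _ (hEtneg _ hzEt), hneg, ← sub_eq_add_neg]
      have h2 : μ (S (x n) - S (z n)) ≤ C * ρ (x n - z n) := by
        rw [← hdiff]
        exact hC _ (hEtsub _ (hxEt n) _ hzEt)
      have h3 : ρ (x n - z n) ≤ ρ (x n - z' n) := by
        apply hρmono
        rw [abs_of_nonneg (sub_nonneg.2 (hzle n)), abs_of_nonneg (sub_nonneg.2 (hz'le n))]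
        exact sub_le_sub_left (hz'lez n) (x n)
      have h4 : C * ρ (x n - z n) ≤ C * (1 / (n + 1)) :=
        mul_le_mul_of_nonneg_left (h3.trans (hz'ρ n).le) hC0
      linarith
    apply squeeze_zero (fun n => hμnn _) hbound
    have ht1 : Filter.Tendsto (fun n : ℕ => C * (1 / ((n : ℝ) + 1))) Filter.atTop (nhds 0) := by
      have := tendsto_one_div_add_atTop_nhds_zero_nat.const_mul C
      simpa using this
    have := ht1.add hl
    simpa using this
  · -- (ii) → (i)
    intro hii x hxE hx0 hxmono hxbdd
    obtain ⟨M, hM⟩ := hxbdd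
    apply hii x (fun n => hEEt (hxE n)) hx0 hxmono
    refine ⟨M, ?_⟩
    rintro _ ⟨n, rfl⟩
    have h1 : ρ (x n) ≤ ν (x n) := by
      apply hρ_le_ν
      · exact hxE n
      · rw [abs_of_nonneg (hx0 n)]
    exact h1.trans (hM ⟨n, rfl⟩)
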